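/- Quotient property of Schur complements: for a 3×3 block matrix M with blocks M_{ij} (i,j ∈ {1,2,3}) where M11 and the Schur complement of M11 in the top-left 2×2 block submatrix are invertible, the Schur complement of the top-left 2×2 block submatrix in M equals the Schur complement of (M/M11)_{11} in M/M11, where M/M11 denotes the Schur complement of M11 in M. -/

import Mathlib

theorem schur_quotient_property {K : Type*} [Field K] {p₁ p₂ p₃ : ℕ}
    (M11 : Matrix (Fin p₁) (Fin p₁) K) (M12 : Matrix (Fin p₁) (Fin p₂) K)
    (M13 : Matrix (Fin p₁) (Fin p₃) K)
    (M21 : Matrix (Fin p₂) (Fin p₁) K) (M22 : Matrix (Fin p₂) (Fin p₂) K)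
    (M23 : Matrix (Fin p₂) (Fin p₃) K)
    (M31 : Matrix (Fin p₃) (Fin p₁) K) (M32 : Matrix (Fin p₃) (Fin p₂) K)
    (M33 : Matrix (Fin p₃) (Fin p₃) K)
    [Invertible M11] [Invertible (M22 - M21 * M11⁻¹ * M12)] :
    M33 - Matrix.fromCols M31 M32 * (Matrix.fromBlocks M11 M12 M21 M22)⁻¹ *
        Matrix.fromRows M13 M23 =
      (M33 - M31 * M11⁻¹ * M13) -
        (M32 - M31 * M11⁻¹ * M12) * (M22 - M21 * M11⁻¹ * M12)⁻¹ *
          (M23 - M21 * M11⁻¹ * M13) := by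
  have hS : Invertible (M22 - M21 * ⅟M11 * M12) := by
    rw [Matrix.invOf_eq_nonsing_inv]; infer_instance
  letI := hS
  letI := Matrix.fromBlocks₁₁Invertible M11 M12 M21 M22
  rw [← Matrix.invOf_eq_nonsing_inv (Matrix.fromBlocks M11 M12 M21 M22),
    Matrix.invOf_fromBlocks₁₁_eq, Matrix.fromCols_mul_fromBlocks,
    Matrix.fromCols_mul_fromRows]
  simp only [Matrix.invOf_eq_nonsing_inv]
  simp only [Matrix.sub_mul, Matrix.mul_sub, Matrix.add_mul, Matrix.mul_add,
    Matrix.neg_mul, Matrix.mul_neg, Matrix.mul_assoc, sub_eq_add_neg, neg_add, neg_neg]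
  abel
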